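/- (Poincaré-type inequality on M_g) Let g ∈ L¹(∂Ω) satisfy ∫_{∂Ω} g < 0 and suppose the boundary functional G(φ) = ∫_{∂Ω} g|φ|^p is weakly sequentially continuous on W^{1,p}(Ω). Then there exists m ∈ (0,1) such that ∫_Ω |∇φ|^p ≥ m ∫_Ω |φ|^p for every φ ∈ W^{1,p}(Ω) with ∫_{∂Ω} g|φ|^p > 0. -/

import Mathlib

open MeasureTheory Filter Set Topology

/-- Weak convergence of a sequence in a normed space. -/
def WeakConv {X : Type*} [NormedAddCommGroup X] [NormedSpace ℝ X] (u : ℕ → X) (v : X) : Prop :=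
  ∀ ℓ : X →L[ℝ] ℝ, Tendsto (fun n => ℓ (u n)) atTop (𝓝 (ℓ v))

/-- Poincaré-type inequality on `M_g`: if `g ∈ L¹(∂Ω)` with `∫_{∂Ω} g < 0` and the
boundary functional `G(φ) = ∫_{∂Ω} g|φ|^p` is weakly sequentially continuous on
`W^{1,p}(Ω)` (modelled by `X` with gradient `D`, inclusion `I` into `L^p(Ω)` and trace
`Tr`), then there exists `m ∈ (0,1)` with `∫_Ω |∇φ|^p ≥ m ∫_Ω |φ|^p` whenever
`∫_{∂Ω} g|φ|^p > 0`. -/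
theorem poincare_on_Mg
    {X Ω B : Type*} [NormedAddCommGroup X] [NormedSpace ℝ X]
    [MeasurableSpace Ω] [MeasurableSpace B]
    (μ : Measure Ω) [IsFiniteMeasure μ] (σ : Measure B) [IsFiniteMeasure σ]
    (N : ℕ) (p : ℝ) (hp : 1 < p)
    (D : X →ₗ[ℝ] Ω → EuclideanSpace ℝ (Fin N)) (I : X →ₗ[ℝ] Ω → ℝ) (Tr : X →ₗ[ℝ] B → ℝ)
    (g : B → ℝ) (hg : Integrable g σ) (hgneg : (∫ x, g x ∂σ) < 0)
    -- weak sequential continuity of `G`: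
    (hGweak : ∀ (u : ℕ → X) (v : X), WeakConv u v →
      Tendsto (fun n => ∫ x, g x * |Tr (u n) x| ^ p ∂σ) atTop
        (𝓝 (∫ x, g x * |Tr v x| ^ p ∂σ)))
    -- `W^{1,p}`-norm identity:
    (hnorm : ∀ φ : X, ‖φ‖ ^ p = (∫ x, ‖D φ x‖ ^ p ∂μ) + ∫ x, |I φ x| ^ p ∂μ)
    -- reflexivity: bounded sequences have weakly convergent subsequences:
    (hreflex : ∀ u : ℕ → X, (∃ R : ℝ, ∀ n, ‖u n‖ ≤ R) →
      ∃ (v : X) (s : ℕ → ℕ), StrictMono s ∧ WeakConv (u ∘ s) v)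
    -- compact embedding `W^{1,p}(Ω) ↪↪ L^p(Ω)`:
    (hcpt : ∀ (u : ℕ → X) (v : X), WeakConv u v →
      Tendsto (fun n => ∫ x, |I (u n) x - I v x| ^ p ∂μ) atTop (𝓝 0))
    -- weak lower semicontinuity of the gradient energy:
    (hwlsc : ∀ (u : ℕ → X) (v : X), WeakConv u v →
      (∫ x, ‖D v x‖ ^ p ∂μ) ≤ liminf (fun n => ∫ x, ‖D (u n) x‖ ^ p ∂μ) atTop)
    -- on the connected domain, gradient-free functions are constants (also in trace):
    (hconst : ∀ φ : X, (∫ x, ‖D φ x‖ ^ p ∂μ) = 0 →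
      ∃ c : ℝ, (∀ᵐ x ∂μ, I φ x = c) ∧ ∀ᵐ x ∂σ, Tr φ x = c) :
    ∃ m : ℝ, m ∈ Ioo (0 : ℝ) 1 ∧ ∀ φ : X,
      (0 < ∫ x, g x * |Tr φ x| ^ p ∂σ) →
        m * (∫ x, |I φ x| ^ p ∂μ) ≤ ∫ x, ‖D φ x‖ ^ p ∂μ := by
  by_contra hcon
  push_neg at hcon
  have hp0 : (0:ℝ) < p := lt_trans one_pos hp
  -- scaling identities
  have key : ∀ (t : ℝ), 0 ≤ t → ∀ φ : X,
      ((∫ x, ‖D (t • φ) x‖ ^ p ∂μ) = t ^ p * ∫ x, ‖D φ x‖ ^ p ∂μ) ∧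
      ((∫ x, |I (t • φ) x| ^ p ∂μ) = t ^ p * ∫ x, |I φ x| ^ p ∂μ) ∧
      ((∫ x, g x * |Tr (t • φ) x| ^ p ∂σ) = t ^ p * ∫ x, g x * |Tr φ x| ^ p ∂σ) := by
    intro t ht φ
    refine ⟨?_, ?_, ?_⟩
    · rw [← integral_const_mul _ _]
      refine integral_congr_ae (Eventually.of_forall fun x => ?_)
      show ‖D (t • φ) x‖ ^ p = t ^ p * ‖D φ x‖ ^ p
      rw [_root_.map_smul, Pi.smul_apply, norm_smul, Real.norm_eq_abs, abs_of_nonneg ht,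
        Real.mul_rpow ht (norm_nonneg _)]
    · rw [← integral_const_mul _ _]
      refine integral_congr_ae (Eventually.of_forall fun x => ?_)
      show |I (t • φ) x| ^ p = t ^ p * |I φ x| ^ p
      rw [_root_.map_smul, Pi.smul_apply, smul_eq_mul, abs_mul, abs_of_nonneg ht,
        Real.mul_rpow ht (abs_nonneg _)]
    · rw [← integral_const_mul _ _]
      refine integral_congr_ae (Eventually.of_forall fun x => ?_)
      show g x * |Tr (t • φ) x| ^ p = t ^ p * (g x * |Tr φ x| ^ p)
      rw [_root_.map_smul, Pi.smul_apply, smul_eq_mul, abs_mul, abs_of_nonneg ht,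
        Real.mul_rpow ht (abs_nonneg _)]
      ring
  set m : ℕ → ℝ := fun n => 1 / (n + 2) with hm
  have hmpos : ∀ n : ℕ, 0 < m n := by intro n; positivity
  have hmmem : ∀ n : ℕ, m n ∈ Ioo (0:ℝ) 1 := by
    intro n
    refine ⟨hmpos n, ?_⟩
    rw [hm]
    have h2 : (0:ℝ) ≤ (n:ℝ) := Nat.cast_nonneg n
    rw [div_lt_one (by linarith)]
    linarith
  have hmhalf : ∀ n : ℕ, m n ≤ 1/2 := by
    intro n
    have h2 : (0:ℝ) ≤ (n:ℝ) := Nat.cast_nonneg n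
    rw [hm]
    rw [div_le_div_iff₀ (by linarith) (by norm_num)]
    linarith
  have hmanti : ∀ i j : ℕ, i ≤ j → m j ≤ m i := by
    intro i j hij
    have : (i:ℝ) ≤ (j:ℝ) := Nat.cast_le.2 hij
    rw [hm]
    rw [div_le_div_iff₀ (by positivity) (by positivity)]
    linarith
  have hm0 : Tendsto m atTop (𝓝 0) := by
    have h1 : Tendsto (fun n : ℕ => ((n:ℝ) + 2)) atTop atTop :=
      tendsto_atTop_add_const_right atTop 2 tendsto_natCast_atTop_atTop
    have := tendsto_inv_atTop_zero.comp h1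
    simpa [hm, one_div, Function.comp_def] using this
  choose φ hφ1 hφ2 using fun n : ℕ => hcon (m n) (hmmem n)
  have hφne : ∀ n, φ n ≠ 0 := by
    intro n h0
    have h1 := hφ1 n
    rw [h0] at h1
    simp [map_zero, Real.zero_rpow hp0.ne'] at h1
  set u : ℕ → X := fun n => ‖φ n‖⁻¹ • φ n with hu
  have htpos : ∀ n, 0 < ‖φ n‖⁻¹ := fun n => inv_pos.2 (norm_pos_iff.2 (hφne n))
  have hun : ∀ n, ‖u n‖ = 1 := fun n => norm_smul_inv_norm (hφne n)
  set A : ℕ → ℝ := fun n => ∫ x, ‖D (u n) x‖ ^ p ∂μ with hA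
  set Bf : ℕ → ℝ := fun n => ∫ x, |I (u n) x| ^ p ∂μ with hBf
  set Gf : ℕ → ℝ := fun n => ∫ x, g x * |Tr (u n) x| ^ p ∂σ with hGf
  have hAnn : ∀ n, 0 ≤ A n :=
    fun n => integral_nonneg fun x => Real.rpow_nonneg (norm_nonneg _) p
  have hBnn : ∀ n, 0 ≤ Bf n :=
    fun n => integral_nonneg fun x => Real.rpow_nonneg (abs_nonneg _) p
  have hABone : ∀ n, A n + Bf n = 1 := by
    intro n
    have := hnorm (u n)
    rw [hun n, Real.one_rpow] at this
    exact this.symm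
  have htp : ∀ n, 0 < (‖φ n‖⁻¹) ^ p := fun n => Real.rpow_pos_of_pos (htpos n) p
  have hAm : ∀ n, A n < m n * Bf n := by
    intro n
    obtain ⟨e1, e2, e3⟩ := key (‖φ n‖⁻¹) (htpos n).le (φ n)
    rw [hA, hBf]
    simp only [hu]
    rw [e1, e2, mul_left_comm]
    exact mul_lt_mul_of_pos_left (hφ2 n) (htp n)
  have hGpos : ∀ n, 0 < Gf n := by
    intro n
    obtain ⟨e1, e2, e3⟩ := key (‖φ n‖⁻¹) (htpos n).le (φ n)
    rw [hGf]
    simp only [hu]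
    rw [e3]
    exact mul_pos (htp n) (hφ1 n)
  have hAsmall : ∀ n, A n < m n := by
    intro n
    have h1 := hAm n
    have h2 : Bf n ≤ 1 := by have := hABone n; have := hAnn n; linarith
    nlinarith [hmpos n]
  have hBhalf : ∀ n, 1/2 ≤ Bf n := by
    intro n
    have h1 := hABone n
    have h2 := hAsmall n
    have h3 := hmhalf n
    have h4 := hAnn n
    linarith
  obtain ⟨v, s, hs, hw⟩ := hreflex u ⟨1, fun n => (hun n).le⟩
  have hA0 : Tendsto (fun n => A (s n)) atTop (𝓝 0) := by
    refine squeeze_zero (fun n => hAnn _) (fun n => ?_) hm0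
    exact le_trans (hAsmall (s n)).le (hmanti n (s n) (hs.le_apply))
  have hDv : (∫ x, ‖D v x‖ ^ p ∂μ) = 0 := by
    refine le_antisymm ?_ (integral_nonneg fun x => Real.rpow_nonneg (norm_nonneg _) p)
    have h1 := hwlsc (u ∘ s) v hw
    have h2 : liminf (fun n => ∫ x, ‖D ((u ∘ s) n) x‖ ^ p ∂μ) atTop = 0 := hA0.liminf_eq
    rw [h2] at h1
    exact h1
  obtain ⟨c, hcμ, hcσ⟩ := hconst v hDv
  by_cases hc : c = 0
  · have h1 := hcpt (u ∘ s) v hw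
    have h2 : ∀ n, (∫ x, |I ((u ∘ s) n) x - I v x| ^ p ∂μ) = Bf (s n) := by
      intro n
      refine integral_congr_ae ?_
      filter_upwards [hcμ] with x hx
      rw [hx, hc, sub_zero]
      rfl
    rw [show (fun n => ∫ x, |I ((u ∘ s) n) x - I v x| ^ p ∂μ) = fun n => Bf (s n)
      from funext h2] at h1
    have := ge_of_tendsto h1 (Eventually.of_forall fun n => hBhalf (s n))
    linarith
  · have hGv : (∫ x, g x * |Tr v x| ^ p ∂σ) = (∫ x, g x ∂σ) * |c| ^ p := by
      rw [← integral_mul_const]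
      refine integral_congr_ae ?_
      filter_upwards [hcσ] with x hx
      rw [hx]
    have hGvneg : (∫ x, g x * |Tr v x| ^ p ∂σ) < 0 := by
      rw [hGv]
      exact mul_neg_of_neg_of_pos hgneg (Real.rpow_pos_of_pos (abs_pos.2 hc) p)
    have hlim := hGweak (u ∘ s) v hw
    have hge : 0 ≤ ∫ x, g x * |Tr v x| ^ p ∂σ :=
      ge_of_tendsto hlim (Eventually.of_forall fun n => (hGpos (s n)).le)
    linarith
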